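/- arXiv:math/0104251 — 5 statements merged into one kernel-verified Lean document; each statement's English description precedes it below -/
import Mathlib

section
/- Fix an integer N ≥ 6 and rationals λ₁, λ₂ ∈ (1 − 1/N, 1]. Let m, q be positive integers with 1 ≤ q ≤ m, and suppose that (1 + q)/m − λ₁/m − λ₂·q/m − 1 ≥ −1 + 1/N. Then λ₁ + λ₂ ≤ 2 − 1/N. -/
/-! With `a = 1 - l₁` and `b = 1 - l₂`, the discrepancy bound reads `m / N ≤ a + q * b`.
Since `b < 1 / N`, the excess `(q - 1) * b` is at most `(q - 1) / N ≤ (m - 1) / N`,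
so `a + b ≥ 1 / N`. -/

theorem div_sub_div_sub_mul_div_sub_one_add_one {K : Type*} [Field K] (m q l₁ l₂ : K)
    (hm : m ≠ 0) :
    (1 + q) / m - l₁ / m - l₂ * q / m - 1 + 1 = ((1 - l₁) + q * (1 - l₂)) / m := by
  field_simp
  ring

theorem le_add_of_mul_le_add_mul {K : Type*} [Field K] [LinearOrder K] [IsStrictOrderedRing K]
    {a b c q m : K} (hc : 0 ≤ c) (hbc : b ≤ c) (hq : 1 ≤ q) (hqm : q ≤ m)
    (h : c * m ≤ a + q * b) : c ≤ a + b := by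
  have : c + (q - 1) * b ≤ a + q * b :=
    calc c + (q - 1) * b ≤ c + (q - 1) * c := by gcongr
      _ = c * q := by ring
      _ ≤ c * m := by gcongr
      _ ≤ a + q * b := h
  linarith

theorem stmt2_general (N : ℤ) (hN : 6 ≤ N) (l₁ l₂ : ℚ)
    (hl₂ : 1 - 1 / N < l₂ ∧ l₂ ≤ 1)
    (m q : ℕ) (hm : 0 < m) (hq : 1 ≤ q) (hqm : q ≤ m)
    (hdiscr : (-1 : ℚ) + 1 / N ≤ (1 + q) / m - l₁ / m - l₂ * q / m - 1) :
    l₁ + l₂ ≤ 2 - 1 / N := by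
  have hN₀ : (0 : ℚ) < N := by exact_mod_cast (by omega : (0 : ℤ) < N)
  have hm₀ : (0 : ℚ) < m := by exact_mod_cast hm
  have hdiv : 1 / (N : ℚ) ≤ ((1 - l₁) + q * (1 - l₂)) / m := by
    rw [← div_sub_div_sub_mul_div_sub_one_add_one _ _ _ _ hm₀.ne']
    linarith
  have key : 1 / (N : ℚ) ≤ (1 - l₁) + (1 - l₂) :=
    le_add_of_mul_le_add_mul (by positivity) (by linarith [hl₂.1]) (by exact_mod_cast hq)
      (by exact_mod_cast hqm) ((le_div_iff₀ hm₀).1 hdiv)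
  linarith

theorem stmt2 (N : ℤ) (hN : 6 ≤ N) (l₁ l₂ : ℚ)
    (hl₁ : 1 - 1 / N < l₁ ∧ l₁ ≤ 1) (hl₂ : 1 - 1 / N < l₂ ∧ l₂ ≤ 1)
    (m q : ℕ) (hm : 0 < m) (hq : 1 ≤ q) (hqm : q ≤ m)
    (hdiscr : (-1 : ℚ) + 1 / N ≤ (1 + q) / m - l₁ / m - l₂ * q / m - 1) :
    l₁ + l₂ ≤ 2 - 1 / N :=
  stmt2_general N hN l₁ l₂ hl₂ m q hm hq hqm hdiscr
end

section
/- Let c be a rational number with 1/2 < c ≤ 1. Suppose there exist a positive integer r, positive integers m₁,…,m_r, and nonnegative integers k₁,…,k_r such that kᵢ·c < 1 for all i, Σᵢ kᵢ > 0, and Σᵢ (1 − 1/mᵢ + kᵢ·c/mᵢ) = 2. Then c = 1/2 + 1/n for some integer n ≥ 3. -/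
-- Conclusion: d = 1/2 - 1/n for some integer n ≥ 3.
-- Helper: d * (2 + 1/x) = 1, x ≥ 1  →  n = 4x+2
lemma L4h (d : ℚ) (x : ℕ) (hx : 1 ≤ x) (heq : d * (2 + 1/(x:ℚ)) = 1) :
    ∃ n : ℤ, 3 ≤ n ∧ d = 1/2 - 1/(n:ℚ) := by
  have hx0 : (0:ℚ) < x := by exact_mod_cast hx
  refine ⟨4*(x:ℤ)+2, by omega, ?_⟩
  have hcast : ((4*(x:ℤ)+2 : ℤ) : ℚ) = 4*(x:ℚ)+2 := by push_cast; ring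
  rw [hcast]
  have h1 : (4*(x:ℚ)+2) ≠ 0 := by positivity
  field_simp at heq ⊢
  linarith

-- L4:  d/m₀ + d/m₁ + d/m₂ = 1, all mᵢ ≥ 1, d < 1/2
lemma L4 (d : ℚ) (m₀ m₁ m₂ : ℕ) (h₀ : 1 ≤ m₀) (h₁ : 1 ≤ m₁) (h₂ : 1 ≤ m₂)
    (hd0 : 0 < d) (hdh : d < 1/2)
    (heq : d/(m₀:ℚ) + d/(m₁:ℚ) + d/(m₂:ℚ) = 1) :
    ∃ n : ℤ, 3 ≤ n ∧ d = 1/2 - 1/(n:ℚ) := by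
  have q₀ : (1:ℚ) ≤ m₀ := by exact_mod_cast h₀
  have q₁ : (1:ℚ) ≤ m₁ := by exact_mod_cast h₁
  have q₂ : (1:ℚ) ≤ m₂ := by exact_mod_cast h₂
  -- each term ≤ d
  have hb₀ : d/(m₀:ℚ) ≤ d := by
    calc d/(m₀:ℚ) ≤ d/1 := by gcongr
    _ = d := div_one d
  have hb₁ : d/(m₁:ℚ) ≤ d := by
    calc d/(m₁:ℚ) ≤ d/1 := by gcongr
    _ = d := div_one d
  have hb₂ : d/(m₂:ℚ) ≤ d := by
    calc d/(m₂:ℚ) ≤ d/1 := by gcongr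
    _ = d := div_one d
  -- at most one of them can be ≥ 2: if two are ≥ 2, sum ≤ 2d < 1
  have key : ∀ a b : ℕ, 2 ≤ a → 2 ≤ b → d/(a:ℚ) + d/(b:ℚ) ≤ d := by
    intro a b ha hb
    have qa : (2:ℚ) ≤ a := by exact_mod_cast ha
    have qb : (2:ℚ) ≤ b := by exact_mod_cast hb
    have h1 : d/(a:ℚ) ≤ d/2 := by gcongr
    have h2 : d/(b:ℚ) ≤ d/2 := by gcongr
    linarith
  rcases Nat.lt_or_ge m₀ 2 with hm₀ | hm₀
  · have e₀ : m₀ = 1 := by omega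
    subst e₀
    rcases Nat.lt_or_ge m₁ 2 with hm₁ | hm₁
    · have e₁ : m₁ = 1 := by omega
      subst e₁
      apply L4h d m₂ h₂
      push_cast at heq ⊢
      field_simp at heq ⊢
      linarith
    · rcases Nat.lt_or_ge m₂ 2 with hm₂ | hm₂
      · have e₂ : m₂ = 1 := by omega
        subst e₂
        apply L4h d m₁ h₁
        push_cast at heq ⊢
        field_simp at heq ⊢
        linarith
      · exfalso
        have := key m₁ m₂ hm₁ hm₂
        push_cast at heq
        linarith
  · rcases Nat.lt_or_ge m₁ 2 with hm₁ | hm₁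
    · have e₁ : m₁ = 1 := by omega
      subst e₁
      rcases Nat.lt_or_ge m₂ 2 with hm₂ | hm₂
      · have e₂ : m₂ = 1 := by omega
        subst e₂
        apply L4h d m₀ h₀
        push_cast at heq ⊢
        field_simp at heq ⊢
        linarith
      · exfalso
        have := key m₀ m₂ hm₀ hm₂
        push_cast at heq
        linarith
    · exfalso
      have := key m₀ m₁ hm₀ hm₁
      linarith [hb₂]

-- L3 ordered: d/m₀ + d/m₁ + 1/m = 1, 1 ≤ m₀ ≤ m₁, 2 ≤ m
lemma L3ord (d : ℚ) (m₀ m₁ m : ℕ) (h₀ : 1 ≤ m₀) (h01 : m₀ ≤ m₁) (hm : 2 ≤ m)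
    (hd0 : 0 < d) (hdh : d < 1/2)
    (heq : d/(m₀:ℚ) + d/(m₁:ℚ) + 1/(m:ℚ) = 1) :
    ∃ n : ℤ, 3 ≤ n ∧ d = 1/2 - 1/(n:ℚ) := by
  have h₁ : 1 ≤ m₁ := le_trans h₀ h01
  have q₀ : (1:ℚ) ≤ m₀ := by exact_mod_cast h₀
  have q₁ : (1:ℚ) ≤ m₁ := by exact_mod_cast h₁
  have qm : (2:ℚ) ≤ m := by exact_mod_cast hm
  have qm0 : (0:ℚ) < m := by linarith
  have hinvm : 1/(m:ℚ) ≤ 1/2 := by gcongr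
  -- m₀ = 1
  have e₀ : m₀ = 1 := by
    by_contra hcon
    have h2 : 2 ≤ m₀ := by omega
    have qa : (2:ℚ) ≤ m₀ := by exact_mod_cast h2
    have qb : (2:ℚ) ≤ m₁ := by exact_mod_cast (le_trans h2 h01)
    have t1 : d/(m₀:ℚ) ≤ d/2 := by gcongr
    have t2 : d/(m₁:ℚ) ≤ d/2 := by gcongr
    linarith
  subst e₀
  push_cast at heq
  rw [div_one] at heq
  rcases Nat.lt_or_ge m₁ 2 with hm₁ | hm₁
  · -- m₁ = 1 : 2d + 1/m = 1, n = 2m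
    have e₁ : m₁ = 1 := by omega
    subst e₁
    push_cast at heq
    rw [div_one] at heq
    refine ⟨2*(m:ℤ), by omega, ?_⟩
    have hcast : ((2*(m:ℤ) : ℤ) : ℚ) = 2*(m:ℚ) := by push_cast; ring
    rw [hcast]
    field_simp at heq ⊢
    linarith
  · -- m₁ ≥ 2 : show m ≤ 3
    have qb : (2:ℚ) ≤ m₁ := by exact_mod_cast hm₁
    have t2 : d/(m₁:ℚ) ≤ d/2 := by gcongr
    have hm3 : m ≤ 3 := by
      by_contra hcon
      have h4 : 4 ≤ m := by omega
      have q4 : (4:ℚ) ≤ m := by exact_mod_cast h4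
      have : 1/(m:ℚ) ≤ 1/4 := by gcongr
      linarith
    interval_cases m
    · -- m = 2 : d + d/m₁ = 1/2, n = 2m₁+2
      refine ⟨2*(m₁:ℤ)+2, by omega, ?_⟩
      have hcast : ((2*(m₁:ℤ)+2 : ℤ) : ℚ) = 2*(m₁:ℚ)+2 := by push_cast; ring
      rw [hcast]
      have hq1 : (0:ℚ) < m₁ := by linarith
      push_cast at heq
      field_simp at heq ⊢
      linarith
    · -- m = 3 : d + d/m₁ = 2/3 ; need m₁ = 2
      have e₁ : m₁ = 2 := by
        by_contra hcon
        have h3 : 3 ≤ m₁ := by omega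
        have q3 : (3:ℚ) ≤ m₁ := by exact_mod_cast h3
        have t3 : d/(m₁:ℚ) ≤ d/3 := by gcongr
        push_cast at heq
        linarith
      subst e₁
      refine ⟨18, by omega, ?_⟩
      push_cast at heq ⊢
      norm_num at heq ⊢
      linarith

-- L3: unordered wrapper
lemma L3 (d : ℚ) (m₀ m₁ m : ℕ) (h₀ : 1 ≤ m₀) (h₁ : 1 ≤ m₁) (hm : 2 ≤ m)
    (hd0 : 0 < d) (hdh : d < 1/2)
    (heq : d/(m₀:ℚ) + d/(m₁:ℚ) + 1/(m:ℚ) = 1) :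
    ∃ n : ℤ, 3 ≤ n ∧ d = 1/2 - 1/(n:ℚ) := by
  rcases le_total m₀ m₁ with h | h
  · exact L3ord d m₀ m₁ m h₀ h hm hd0 hdh heq
  · exact L3ord d m₁ m₀ m h₁ h hm hd0 hdh (by linarith)

-- L2 ordered: d/m₀ + 1/m + 1/m' = 1, 1 ≤ m₀, 2 ≤ m ≤ m'
lemma L2ord (d : ℚ) (m₀ m m' : ℕ) (h₀ : 1 ≤ m₀) (hm : 2 ≤ m) (hmm : m ≤ m')
    (hd0 : 0 < d) (hdh : d < 1/2)
    (heq : d/(m₀:ℚ) + 1/(m:ℚ) + 1/(m':ℚ) = 1) :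
    ∃ n : ℤ, 3 ≤ n ∧ d = 1/2 - 1/(n:ℚ) := by
  have hm' : 2 ≤ m' := le_trans hm hmm
  have q₀ : (1:ℚ) ≤ m₀ := by exact_mod_cast h₀
  have q₀0 : (0:ℚ) < m₀ := by linarith
  have qm : (2:ℚ) ≤ m := by exact_mod_cast hm
  have qm' : (2:ℚ) ≤ m' := by exact_mod_cast hm'
  have qm'0 : (0:ℚ) < m' := by linarith
  have hdm₀ : d/(m₀:ℚ) ≤ d := by
    calc d/(m₀:ℚ) ≤ d/1 := by gcongr
    _ = d := div_one d
  have hdm₀0 : 0 < d/(m₀:ℚ) := div_pos hd0 q₀0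
  have hm3 : m ≤ 3 := by
    by_contra hcon
    have h4 : (4:ℚ) ≤ m := by exact_mod_cast (show 4 ≤ m by omega)
    have h4' : (4:ℚ) ≤ m' := by exact_mod_cast (show 4 ≤ m' by omega)
    have t1 : 1/(m:ℚ) ≤ 1/4 := by gcongr
    have t2 : 1/(m':ℚ) ≤ 1/4 := by gcongr
    linarith
  -- helper to show m₀ = 1 when d/m₀ = v with v ≥ 1/3
  have hone : ∀ v : ℚ, 1/3 ≤ v → d/(m₀:ℚ) = v → m₀ = 1 := by
    intro v hv hveq
    by_contra hcon
    have h2 : (2:ℚ) ≤ m₀ := by exact_mod_cast (show 2 ≤ m₀ by omega)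
    rw [div_eq_iff (ne_of_gt q₀0)] at hveq
    nlinarith
  interval_cases m
  · -- m = 2: d/m₀ + 1/m' = 1/2
    push_cast at heq
    norm_num at heq
    simp only [← one_div] at heq
    have hm'3 : 3 ≤ m' := by
      by_contra hcon
      have e : m' = 2 := by omega
      subst e
      norm_num at heq
      linarith
    have qm'3 : (3:ℚ) ≤ m' := by exact_mod_cast hm'3
    have t1 : 1/(m':ℚ) ≤ 1/3 := by gcongr
    have hm₀2 : m₀ ≤ 2 := by
      by_contra hcon
      have h3 : (3:ℚ) ≤ m₀ := by exact_mod_cast (show 3 ≤ m₀ by omega)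
      have t2 : d/(m₀:ℚ) ≤ d/3 := by gcongr
      linarith
    interval_cases m₀
    · -- m₀ = 1: n = m'
      refine ⟨(m':ℤ), by exact_mod_cast hm'3, ?_⟩
      push_cast at heq ⊢
      rw [div_one] at heq
      linarith
    · -- m₀ = 2: d/2 + 1/m' = 1/2
      have hm'4 : m' ≤ 3 := by
        by_contra hcon
        have h4 : (4:ℚ) ≤ m' := by exact_mod_cast (show 4 ≤ m' by omega)
        have t2 : 1/(m':ℚ) ≤ 1/4 := by gcongr
        push_cast at heq
        linarith
      have e : m' = 3 := by omega
      subst e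
      refine ⟨6, by omega, ?_⟩
      push_cast at heq ⊢
      norm_num at heq ⊢
      linarith
  · -- m = 3: d/m₀ + 1/m' = 2/3
    push_cast at heq
    norm_num at heq
    simp only [← one_div] at heq
    have hm'5 : m' ≤ 5 := by
      by_contra hcon
      have h6 : (6:ℚ) ≤ m' := by exact_mod_cast (show 6 ≤ m' by omega)
      have t2 : 1/(m':ℚ) ≤ 1/6 := by gcongr
      linarith
    interval_cases m'
    · have e : m₀ = 1 := hone (1/3) (by norm_num) (by norm_num at heq ⊢; linarith)
      subst e
      refine ⟨6, by omega, ?_⟩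
      norm_num at heq ⊢
      linarith
    · have e : m₀ = 1 := hone (5/12) (by norm_num) (by norm_num at heq ⊢; linarith)
      subst e
      refine ⟨12, by omega, ?_⟩
      norm_num at heq ⊢
      linarith
    · have e : m₀ = 1 := hone (7/15) (by norm_num) (by norm_num at heq ⊢; linarith)
      subst e
      refine ⟨30, by omega, ?_⟩
      norm_num at heq ⊢
      linarith

lemma L2 (d : ℚ) (m₀ m m' : ℕ) (h₀ : 1 ≤ m₀) (hm : 2 ≤ m) (hm' : 2 ≤ m')
    (hd0 : 0 < d) (hdh : d < 1/2)
    (heq : d/(m₀:ℚ) + 1/(m:ℚ) + 1/(m':ℚ) = 1) :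
    ∃ n : ℤ, 3 ≤ n ∧ d = 1/2 - 1/(n:ℚ) := by
  rcases le_total m m' with h | h
  · exact L2ord d m₀ m m' h₀ hm h hd0 hdh heq
  · exact L2ord d m₀ m' m h₀ hm' h hd0 hdh (by linarith)


lemma core (d a b : ℚ) (m₀ : ℕ) (hm₀ : 1 ≤ m₀) (hd0 : 0 < d) (hdh : d < 1/2)
    (ha : (∃ mm : ℕ, 1 ≤ mm ∧ a = d/(mm:ℚ)) ∨ (∃ mm : ℕ, 2 ≤ mm ∧ a = 1/(mm:ℚ)))
    (hb : (∃ mm : ℕ, 1 ≤ mm ∧ b = d/(mm:ℚ)) ∨ (∃ mm : ℕ, 2 ≤ mm ∧ b = 1/(mm:ℚ)))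
    (heq : d/(m₀:ℚ) + a + b = 1) :
    ∃ n : ℤ, 3 ≤ n ∧ d = 1/2 - 1/(n:ℚ) := by
  rcases ha with ⟨m₁, h₁, rfl⟩ | ⟨m₁, h₁, rfl⟩ <;>
    rcases hb with ⟨m₂, h₂, rfl⟩ | ⟨m₂, h₂, rfl⟩
  · exact L4 d m₀ m₁ m₂ hm₀ h₁ h₂ hd0 hdh heq
  · exact L3 d m₀ m₁ m₂ hm₀ h₁ h₂ hd0 hdh heq
  · exact L3 d m₀ m₂ m₁ hm₀ h₂ h₁ hd0 hdh (by linarith)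
  · exact L2 d m₀ m₁ m₂ hm₀ h₁ h₂ hd0 hdh heq

theorem stmt3 (c : ℚ) (hc1 : 1 / 2 < c) (hc2 : c ≤ 1)
    (h : ∃ (r : ℕ) (m k : Fin r → ℕ), 0 < r ∧ (∀ i, 0 < m i) ∧
      (∀ i, (k i : ℚ) * c < 1) ∧ 0 < ∑ i, k i ∧
      ∑ i, (1 - 1 / (m i : ℚ) + (k i : ℚ) * c / (m i : ℚ)) = 2) :
    ∃ n : ℤ, 3 ≤ n ∧ c = 1 / 2 + 1 / n := by
  classical
  obtain ⟨r, m, k, hr, hm, hkc, hks, hsum⟩ := h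
  have hc0 : (0:ℚ) < c := by linarith
  -- c < 1
  have hclt : c < 1 := by
    rcases lt_or_eq_of_le hc2 with hlt | heqc
    · exact hlt
    · exfalso
      have hk0 : ∀ i, k i = 0 := by
        intro i
        have h1 : (k i : ℚ) * c < 1 := hkc i
        rw [heqc, mul_one] at h1
        exact_mod_cast Nat.lt_one_iff.mp (by exact_mod_cast h1)
      simp [hk0] at hks
  set d : ℚ := 1 - c with hd
  have hd0 : 0 < d := by rw [hd]; linarith
  have hdh : d < 1/2 := by rw [hd]; linarith
  have hk01 : ∀ i, k i = 0 ∨ k i = 1 := by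
    intro i
    by_contra hcon
    push_neg at hcon
    have h2 : 2 ≤ k i := by omega
    have h2' : (2:ℚ) ≤ (k i : ℚ) := by exact_mod_cast h2
    have := hkc i
    nlinarith
  set f : Fin r → ℚ := fun i => (1 - (k i : ℚ) * c) / (m i : ℚ) with hf
  have hm1 : ∀ i, (1:ℚ) ≤ (m i : ℚ) := fun i => by exact_mod_cast hm i
  have hm0 : ∀ i, (0:ℚ) < (m i : ℚ) := fun i => lt_of_lt_of_le one_pos (hm1 i)
  have hfpos : ∀ i, 0 < f i := fun i => div_pos (by linarith [hkc i]) (hm0 i)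
  -- rewrite the sum
  have hsum2 : ∑ i, f i = (r:ℚ) - 2 := by
    have hterm : ∀ i, 1 - 1/(m i:ℚ) + (k i:ℚ)*c/(m i:ℚ) = 1 - f i := by
      intro i
      have hne : (m i:ℚ) ≠ 0 := ne_of_gt (hm0 i)
      rw [hf]
      field_simp
      ring
    rw [Finset.sum_congr rfl (fun i _ => hterm i)] at hsum
    rw [Finset.sum_sub_distrib, Finset.sum_const, Finset.card_univ,
      Fintype.card_fin, nsmul_eq_mul, mul_one] at hsum
    linarith
  -- the special index
  obtain ⟨i₀, hki₀⟩ : ∃ i, k i = 1 := by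
    by_contra hcon
    push_neg at hcon
    have hz : ∀ i, k i = 0 := by
      intro i
      rcases hk01 i with h0 | h1
      · exact h0
      · exact absurd h1 (hcon i)
    simp [hz] at hks
  have hfi₀ : f i₀ = d / (m i₀ : ℚ) := by
    rw [hf, hd]
    simp [hki₀]
  have hfi₀lt : f i₀ < 1/2 := by
    rw [hfi₀]
    calc d / (m i₀:ℚ) ≤ d/1 := by gcongr; exact hm1 i₀
    _ = d := div_one d
    _ < 1/2 := hdh
  -- structure of each term
  have hprop : ∀ i, f i ≠ 1 →
      ((∃ mm : ℕ, 1 ≤ mm ∧ f i = d/(mm:ℚ)) ∨ (∃ mm : ℕ, 2 ≤ mm ∧ f i = 1/(mm:ℚ))) := by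
    intro i hne
    rcases hk01 i with h0 | h1
    · right
      refine ⟨m i, ?_, ?_⟩
      · rcases Nat.lt_or_ge (m i) 2 with hlt | hge
        · exfalso
          have e1 : m i = 1 := by have := hm i; omega
          apply hne
          rw [hf]
          simp [h0, e1]
        · exact hge
      · rw [hf]; simp [h0]
    · left
      exact ⟨m i, hm i, by rw [hf, hd]; simp [h1]⟩
  have hf_half : ∀ i, f i ≠ 1 → f i ≤ 1/2 := by
    intro i hne
    rcases hprop i hne with ⟨mm, hmm, he⟩ | ⟨mm, hmm, he⟩
    · rw [he]
      have : (1:ℚ) ≤ mm := by exact_mod_cast hmm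
      calc d/(mm:ℚ) ≤ d/1 := by gcongr
      _ = d := div_one d
      _ ≤ 1/2 := hdh.le
    · rw [he]
      have : (2:ℚ) ≤ mm := by exact_mod_cast hmm
      have h0 : (0:ℚ) < 2 := by norm_num
      have : 1/(mm:ℚ) ≤ 1/2 := by gcongr
      linarith
  -- filter
  set T : Finset (Fin r) := Finset.univ.filter (fun i => ¬ f i = 1) with hT
  have hsplit := Finset.sum_filter_add_sum_filter_not Finset.univ (fun i => f i = 1) f
  have hcards := Finset.card_filter_add_card_filter_not
    (s := (Finset.univ : Finset (Fin r))) (p := fun i => f i = 1)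
  have honesum : ∑ i ∈ Finset.univ.filter (fun i => f i = 1), f i
      = ((Finset.univ.filter (fun i => f i = 1)).card : ℚ) := by
    rw [Finset.sum_congr rfl (fun i hi => (Finset.mem_filter.mp hi).2)]
    simp
  have hTsum : ∑ i ∈ T, f i = (T.card : ℚ) - 2 := by
    have hcard2 : ((Finset.univ.filter (fun i => f i = 1)).card : ℚ) + (T.card : ℚ) = (r:ℚ) := by
      rw [hT]
      exact_mod_cast congrArg (Nat.cast (R := ℚ))
        (by simpa [Finset.card_univ] using hcards)
    rw [hT] at *
    linarith [hsplit, honesum, hsum2]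
  have hi₀T : i₀ ∈ T := by
    rw [hT]
    simp only [Finset.mem_filter, Finset.mem_univ, true_and]
    intro hcon
    rw [hcon] at hfi₀lt
    norm_num at hfi₀lt
  have hTmem : ∀ i ∈ T, f i ≠ 1 := by
    intro i hi
    rw [hT] at hi
    exact (Finset.mem_filter.mp hi).2
  -- strict bound : sum < card/2
  have hstrict : ∑ i ∈ T, f i < ∑ i ∈ T, (1/2 : ℚ) :=
    Finset.sum_lt_sum (fun i hi => hf_half i (hTmem i hi)) ⟨i₀, hi₀T, hfi₀lt⟩
  rw [Finset.sum_const, nsmul_eq_mul] at hstrict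
  have hpos : 0 < ∑ i ∈ T, f i := Finset.sum_pos (fun i _ => hfpos i) ⟨i₀, hi₀T⟩
  have hcard3 : T.card = 3 := by
    have h1 : (2:ℚ) < (T.card : ℚ) := by linarith [hTsum]
    have h2 : (T.card : ℚ) - 2 < (T.card : ℚ) * (1/2) := by linarith [hTsum]
    have h3 : 2 < T.card := by exact_mod_cast h1
    have h4 : (T.card:ℚ) < 4 := by linarith
    have h5 : T.card < 4 := by exact_mod_cast h4
    omega
  obtain ⟨x, y, z, hxy, hxz, hyz, hTxyz⟩ := Finset.card_eq_three.mp hcard3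
  have hsum3 : f x + f y + f z = 1 := by
    have : ∑ i ∈ T, f i = f x + f y + f z := by
      rw [hTxyz, Finset.sum_insert (by simp [hxy, hxz]), Finset.sum_pair hyz]
      ring
    rw [this, hcard3] at hTsum
    push_cast at hTsum
    linarith
  have hx : x ∈ T := by rw [hTxyz]; simp
  have hy : y ∈ T := by rw [hTxyz]; simp
  have hz : z ∈ T := by rw [hTxyz]; simp
  have Px := hprop x (hTmem x hx)
  have Py := hprop y (hTmem y hy)
  have Pz := hprop z (hTmem z hz)
  have hi₀mem : i₀ = x ∨ i₀ = y ∨ i₀ = z := by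
    have := hi₀T
    rw [hTxyz] at this
    simpa using this
  have main : ∃ n : ℤ, 3 ≤ n ∧ d = 1/2 - 1/(n:ℚ) := by
    rcases hi₀mem with rfl | rfl | rfl
    · exact core d (f y) (f z) (m i₀) (hm i₀) hd0 hdh Py Pz (by rw [← hfi₀]; linarith)
    · exact core d (f x) (f z) (m i₀) (hm i₀) hd0 hdh Px Pz (by rw [← hfi₀]; linarith)
    · exact core d (f x) (f y) (m i₀) (hm i₀) hd0 hdh Px Py (by rw [← hfi₀]; linarith)
  obtain ⟨n, hn3, hdn⟩ := main
  refine ⟨n, hn3, ?_⟩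
  rw [hd] at hdn
  linarith
end

section
/- The set of rational numbers c with 1/2 < c ≤ 1 for which there exist a positive integer r, positive integers m₁,…,m_r, and nonnegative integers k₁,…,k_r satisfying kᵢ·c < 1 for all i, Σᵢ kᵢ > 0, and Σᵢ (1 − 1/mᵢ + kᵢ·c/mᵢ) = 2, is exactly the set {1/2 + 1/n : n ∈ ℤ, n ≥ 3}. -/
-- all-type1 case, reduced: m1 = m2 = 1
lemma core3' (c : ℚ) (m : ℕ) (hm : 1 ≤ m)
    (h : (1-c) + (1-c) + (1-c)/(m:ℚ) = 1) : ∃ n : ℤ, 3 ≤ n ∧ c = 1/2 + 1/n := by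
  have hm' : (1:ℚ) ≤ (m:ℚ) := by exact_mod_cast hm
  have hm0 : (m:ℚ) ≠ 0 := by linarith
  refine ⟨4*m+2, by omega, ?_⟩
  have hne : ((4*(m:ℤ)+2 : ℤ):ℚ) ≠ 0 := by push_cast; linarith
  field_simp at h ⊢
  push_cast
  ring_nf
  ring_nf at h
  linarith

-- two type1, reduced: one of them has m = 1
lemma core2' (c : ℚ) (hc1 : 1/2 < c) (p m : ℕ) (hp : 2 ≤ p) (hm : 1 ≤ m)
    (h : 1/(p:ℚ) + (1-c) + (1-c)/(m:ℚ) = 1) : ∃ n : ℤ, 3 ≤ n ∧ c = 1/2 + 1/n := by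
  have hm' : (1:ℚ) ≤ (m:ℚ) := by exact_mod_cast hm
  have hm0 : (m:ℚ) ≠ 0 := by linarith
  have hp' : (2:ℚ) ≤ (p:ℚ) := by exact_mod_cast hp
  have hp0 : (p:ℚ) ≠ 0 := by linarith
  rcases eq_or_lt_of_le hp with hp2 | hp3
  · -- p = 2 : c = 1/2 + 1/(2m+2)
    subst hp2  -- wrong direction? hp2 : 2 = p
    refine ⟨2*m+2, by omega, ?_⟩
    push_cast at h ⊢
    field_simp at h ⊢
    ring_nf at h ⊢
    linarith
  · -- 3 ≤ p
    have hp3' : 3 ≤ p := hp3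
    have hp3Q : (3:ℚ) ≤ (p:ℚ) := by exact_mod_cast hp3'
    -- key bound: m * (p - 2) < p
    have hb : (m:ℚ) * ((p:ℚ) - 2) < (p:ℚ) := by
      have h2 : (1-c) * ((m:ℚ)+1) * p = (m:ℚ) * ((p:ℚ)-1) := by
        field_simp at h; ring_nf at h ⊢; linarith
      nlinarith [h2]
    have hbN : m * (p-2) < p := by
      have : ((m * (p-2) : ℕ) : ℚ) < (p:ℚ) := by push_cast [Nat.cast_sub (by omega : 2 ≤ p)]; linarith
      exact_mod_cast this
    have hm2 : m = 1 ∨ (m = 2 ∧ p = 3) := by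
      rcases Nat.lt_or_ge m 2 with h1 | h1
      · left; omega
      · right
        have h2 : 2*(p-2) ≤ m*(p-2) := Nat.mul_le_mul_right _ h1
        have hp3e : p = 3 := by omega
        subst hp3e
        simp at hbN
        omega
    rcases hm2 with rfl | ⟨rfl, rfl⟩
    · refine ⟨2*p, by omega, ?_⟩
      push_cast at h ⊢
      field_simp at h ⊢
      ring_nf at h ⊢
      linarith
    · refine ⟨18, by omega, ?_⟩
      norm_num at h ⊢
      linarith

-- one type1, reduced: p ≤ 3
lemma core1' (c : ℚ) (hc1 : 1/2 < c) (hc2 : c < 1) (p q m : ℕ)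
    (hp : 2 ≤ p) (hp3 : p ≤ 3) (hq : 2 ≤ q) (hm : 1 ≤ m)
    (h : 1/(p:ℚ) + 1/(q:ℚ) + (1-c)/(m:ℚ) = 1) : ∃ n : ℤ, 3 ≤ n ∧ c = 1/2 + 1/n := by
  have hm' : (1:ℚ) ≤ (m:ℚ) := by exact_mod_cast hm
  have hm0 : (m:ℚ) ≠ 0 := by linarith
  have hq' : (2:ℚ) ≤ (q:ℚ) := by exact_mod_cast hq
  have hq0 : (q:ℚ) ≠ 0 := by linarith
  have hpos : 0 < (1-c)/(m:ℚ) := div_pos (by linarith) (by linarith)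
  interval_cases p
  · -- p = 2
    have hq3 : 3 ≤ q := by
      rcases eq_or_lt_of_le hq with h2 | h2
      · exfalso
        have : (q:ℚ) = 2 := by exact_mod_cast h2.symm
        rw [this] at h; norm_num at h
        rcases h with h | h
        · linarith
        · omega
      · exact h2
    have hq3Q : (3:ℚ) ≤ (q:ℚ) := by exact_mod_cast hq3
    -- (1-c)*2*q = m*(q-2)
    have h2 : (1-c) * 2 * q = (m:ℚ) * ((q:ℚ) - 2) := by
      push_cast at h
      field_simp at h; ring_nf at h ⊢; linarith
    have hb : (m:ℚ) * ((q:ℚ) - 2) < (q:ℚ) := by nlinarith [h2]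
    have hbN : m * (q-2) < q := by
      have : ((m * (q-2) : ℕ) : ℚ) < (q:ℚ) := by
        push_cast [Nat.cast_sub (by omega : 2 ≤ q)]; linarith
      exact_mod_cast this
    rcases Nat.lt_or_ge m 2 with h1 | h1
    · -- m = 1 : c = 1/2 + 1/q
      have : m = 1 := by omega
      subst this
      refine ⟨q, by omega, ?_⟩
      push_cast
      field_simp at h2 ⊢
      ring_nf at h2 ⊢; linarith
    · -- m ≥ 2 : q = 3, m = 2, c = 2/3
      have hmul : 2*(q-2) ≤ m*(q-2) := Nat.mul_le_mul_right _ h1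
      have hq3e : q = 3 := by omega
      subst hq3e
      simp at hbN
      have : m = 2 := by omega
      subst this
      refine ⟨6, by omega, ?_⟩
      norm_num at h2 ⊢; linarith
  · -- p = 3
    have hq6 : q ≤ 5 := by
      by_contra hcon
      have h6 : (6:ℚ) ≤ (q:ℚ) := by exact_mod_cast (by omega : 6 ≤ q)
      have e1 : 1/(q:ℚ) ≤ 1/6 := by rw [div_le_div_iff₀ (by linarith) (by norm_num)]; linarith
      have e2 : (1-c)/(m:ℚ) ≤ 1-c := div_le_self (by linarith) hm'
      push_cast at h
      norm_num at h
      simp only [one_div] at e1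
      linarith
    interval_cases q
    · -- q = 2 : (1-c)*6 = m
      have h2 : (1-c) * 6 = (m:ℚ) := by
        push_cast at h; field_simp at h; ring_nf at h ⊢; linarith
      have hmN : m < 3 := by exact_mod_cast (by linarith : (m:ℚ) < 3)
      interval_cases m
      · exact ⟨3, by omega, by norm_num at h2 ⊢; linarith⟩
      · exact ⟨6, by omega, by norm_num at h2 ⊢; linarith⟩
    · -- q = 3 : (1-c)*3 = m
      have h2 : (1-c) * 3 = (m:ℚ) := by
        push_cast at h; field_simp at h; ring_nf at h ⊢; linarith
      have hmN : m < 2 := by exact_mod_cast (by linarith : (m:ℚ) < 2)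
      interval_cases m
      exact ⟨6, by omega, by norm_num at h2 ⊢; linarith⟩
    · -- q = 4 : (1-c)*12 = 5m
      have h2 : (1-c) * 12 = 5 * (m:ℚ) := by
        push_cast at h; field_simp at h; ring_nf at h ⊢; linarith
      have hmN : m < 2 := by exact_mod_cast (by linarith : (m:ℚ) < 2)
      interval_cases m
      exact ⟨12, by omega, by norm_num at h2 ⊢; linarith⟩
    · -- q = 5 : (1-c)*15 = 7m
      have h2 : (1-c) * 15 = 7 * (m:ℚ) := by
        push_cast at h; field_simp at h; ring_nf at h ⊢; linarith
      have hmN : m < 2 := by exact_mod_cast (by linarith : (m:ℚ) < 2)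
      interval_cases m
      exact ⟨30, by omega, by norm_num at h2 ⊢; linarith⟩

lemma core1 (c : ℚ) (hc1 : 1/2 < c) (hc2 : c < 1) (p q m : ℕ)
    (hp : 2 ≤ p) (hq : 2 ≤ q) (hm : 1 ≤ m)
    (h : 1/(p:ℚ) + 1/(q:ℚ) + (1-c)/(m:ℚ) = 1) : ∃ n : ℤ, 3 ≤ n ∧ c = 1/2 + 1/n := by
  have hkey : p ≤ 3 ∨ q ≤ 3 := by
    by_contra hcon
    push_neg at hcon
    have hp4 : (4:ℚ) ≤ (p:ℚ) := by exact_mod_cast (by omega : 4 ≤ p)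
    have hq4 : (4:ℚ) ≤ (q:ℚ) := by exact_mod_cast (by omega : 4 ≤ q)
    have hm' : (1:ℚ) ≤ (m:ℚ) := by exact_mod_cast hm
    have e1 : 1/(p:ℚ) ≤ 1/4 := by rw [div_le_div_iff₀ (by linarith) (by norm_num)]; linarith
    have e2 : 1/(q:ℚ) ≤ 1/4 := by rw [div_le_div_iff₀ (by linarith) (by norm_num)]; linarith
    have e3 : (1-c)/(m:ℚ) ≤ 1-c := div_le_self (by linarith) hm'
    linarith
  rcases hkey with h3 | h3
  · exact core1' c hc1 hc2 p q m hp h3 hq hm h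
  · exact core1' c hc1 hc2 q p m hq h3 hp hm (by linarith)

lemma core2 (c : ℚ) (hc1 : 1/2 < c) (hc2 : c < 1) (p m1 m2 : ℕ)
    (hp : 2 ≤ p) (h1 : 1 ≤ m1) (h2 : 1 ≤ m2)
    (h : 1/(p:ℚ) + (1-c)/(m1:ℚ) + (1-c)/(m2:ℚ) = 1) : ∃ n : ℤ, 3 ≤ n ∧ c = 1/2 + 1/n := by
  have hkey : m1 = 1 ∨ m2 = 1 := by
    by_contra hcon
    push_neg at hcon
    have ha : (2:ℚ) ≤ (m1:ℚ) := by exact_mod_cast (by omega : 2 ≤ m1)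
    have hb : (2:ℚ) ≤ (m2:ℚ) := by exact_mod_cast (by omega : 2 ≤ m2)
    have hp' : (2:ℚ) ≤ (p:ℚ) := by exact_mod_cast hp
    have e0 : 1/(p:ℚ) ≤ 1/2 := by rw [div_le_div_iff₀ (by linarith) (by norm_num)]; linarith
    have e1 : (1-c)/(m1:ℚ) < 1/4 := by rw [div_lt_iff₀ (by linarith)]; nlinarith
    have e2 : (1-c)/(m2:ℚ) < 1/4 := by rw [div_lt_iff₀ (by linarith)]; nlinarith
    linarith
  rcases hkey with rfl | rfl
  · exact core2' c hc1 p m2 hp h2 (by push_cast at h; push_cast; linarith)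
  · exact core2' c hc1 p m1 hp h1 (by push_cast at h; push_cast; linarith)

lemma core3 (c : ℚ) (hc1 : 1/2 < c) (hc2 : c < 1) (m1 m2 m3 : ℕ)
    (h1 : 1 ≤ m1) (h2 : 1 ≤ m2) (h3 : 1 ≤ m3)
    (h : (1-c)/(m1:ℚ) + (1-c)/(m2:ℚ) + (1-c)/(m3:ℚ) = 1) : ∃ n : ℤ, 3 ≤ n ∧ c = 1/2 + 1/n := by
  have key : ∀ a b : ℕ, 2 ≤ a → 2 ≤ b →
      (1-c)/(a:ℚ) + (1-c)/(b:ℚ) < 1/2 := by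
    intro a b ha hb
    have ha' : (2:ℚ) ≤ (a:ℚ) := by exact_mod_cast ha
    have hb' : (2:ℚ) ≤ (b:ℚ) := by exact_mod_cast hb
    have e1 : (1-c)/(a:ℚ) < 1/4 := by rw [div_lt_iff₀ (by linarith)]; nlinarith
    have e2 : (1-c)/(b:ℚ) < 1/4 := by rw [div_lt_iff₀ (by linarith)]; nlinarith
    linarith
  have hkey : (m1 = 1 ∧ m2 = 1) ∨ (m1 = 1 ∧ m3 = 1) ∨ (m2 = 1 ∧ m3 = 1) := by
    by_contra hcon
    push_neg at hcon
    -- at least two of them are ≥ 2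
    have e3 : ∀ b : ℕ, 1 ≤ b → (1-c)/(b:ℚ) ≤ 1-c := fun b hb =>
      div_le_self (by linarith) (by exact_mod_cast hb)
    rcases Nat.lt_or_ge m1 2 with q1 | q1 <;> rcases Nat.lt_or_ge m2 2 with q2 | q2 <;>
      rcases Nat.lt_or_ge m3 2 with q3 | q3
    · exact hcon.1 (by omega) (by omega)
    · exact hcon.1 (by omega) (by omega)
    · exact hcon.2.1 (by omega) (by omega)
    · have := key m2 m3 q2 q3; have := e3 m1 h1; linarith
    · exact hcon.2.2 (by omega) (by omega)
    · have := key m1 m3 q1 q3; have := e3 m2 h2; linarith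
    · have := key m1 m2 q1 q2; have := e3 m3 h3; linarith
    · have := key m1 m2 q1 q2; have := e3 m3 h3; linarith
  rcases hkey with ⟨rfl, rfl⟩ | ⟨rfl, rfl⟩ | ⟨rfl, rfl⟩
  · exact core3' c m3 h3 (by push_cast at h; push_cast; linarith)
  · exact core3' c m2 h2 (by push_cast at h; push_cast; linarith)
  · exact core3' c m1 h1 (by push_cast at h; push_cast; linarith)

lemma master (c : ℚ) (hc1 : 1/2 < c) (hc2 : c < 1) (u v w : ℚ)
    (hu : ∃ m : ℕ, 1 ≤ m ∧ u = (1-c)/(m:ℚ))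
    (hv : (∃ p : ℕ, 2 ≤ p ∧ v = 1/(p:ℚ)) ∨ (∃ m : ℕ, 1 ≤ m ∧ v = (1-c)/(m:ℚ)))
    (hw : (∃ p : ℕ, 2 ≤ p ∧ w = 1/(p:ℚ)) ∨ (∃ m : ℕ, 1 ≤ m ∧ w = (1-c)/(m:ℚ)))
    (hsum : u + v + w = 1) : ∃ n : ℤ, 3 ≤ n ∧ c = 1/2 + 1/n := by
  obtain ⟨m1, hm1, rfl⟩ := hu
  rcases hv with ⟨p, hp, rfl⟩ | ⟨m2, hm2, rfl⟩ <;> rcases hw with ⟨q, hq, rfl⟩ | ⟨m3, hm3, rfl⟩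
  · exact core1 c hc1 hc2 p q m1 hp hq hm1 (by linarith)
  · exact core2 c hc1 hc2 p m1 m3 hp hm1 hm3 (by linarith)
  · exact core2 c hc1 hc2 q m1 m2 hq hm1 hm2 (by linarith)
  · exact core3 c hc1 hc2 m1 m2 m3 hm1 hm2 hm3 (by linarith)

theorem stmt5 :
    {c : ℚ | 1 / 2 < c ∧ c ≤ 1 ∧
      ∃ (r : ℕ) (m k : Fin r → ℕ), 0 < r ∧ (∀ i, 0 < m i) ∧
        (∀ i, (k i : ℚ) * c < 1) ∧ 0 < ∑ i, k i ∧
        ∑ i, (1 - 1 / (m i : ℚ) + (k i : ℚ) * c / (m i : ℚ)) = 2} =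
    {c : ℚ | ∃ n : ℤ, 3 ≤ n ∧ c = 1 / 2 + 1 / n} := by
  ext c
  simp only [Set.mem_setOf_eq]
  constructor
  · rintro ⟨hc1, hc2, r, m, k, hr, hm, hkc, hksum, hsum⟩
    have hmQ : ∀ i, (1:ℚ) ≤ (m i : ℚ) := fun i => by exact_mod_cast hm i
    have hm0 : ∀ i, (m i : ℚ) ≠ 0 := fun i => by have := hmQ i; linarith
    -- k i ≤ 1
    have hk1 : ∀ i, k i ≤ 1 := by
      intro i
      by_contra hcon
      have h2 : (2:ℚ) ≤ (k i : ℚ) := by exact_mod_cast (by omega : 2 ≤ k i)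
      have := hkc i
      nlinarith
    obtain ⟨i0, hi0⟩ : ∃ i, k i = 1 := by
      by_contra hcon
      push_neg at hcon
      have hz : ∀ i, k i = 0 := fun i => by have := hk1 i; have := hcon i; omega
      rw [Finset.sum_congr rfl (fun i _ => hz i)] at hksum
      simp at hksum
    have hclt1 : c < 1 := by have := hkc i0; rw [hi0] at this; push_cast at this; linarith
    -- the summands
    set t : Fin r → ℚ := fun i => 1 - 1 / (m i : ℚ) + (k i : ℚ) * c / (m i : ℚ) with ht
    have htu : ∀ i, t i = 1 - (1 - (k i : ℚ) * c) / (m i : ℚ) := by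
      intro i
      rw [ht]
      have := hm0 i
      field_simp
      ring
    set S : Finset (Fin r) := Finset.univ.filter (fun i => 0 < k i ∨ 2 ≤ m i) with hSdef
    have hsumS : ∑ i ∈ S, t i = 2 := by
      rw [hSdef, Finset.sum_filter_of_ne, hsum]
      intro i _ hti
      by_contra hcon
      push_neg at hcon
      have hk0 : k i = 0 := by omega
      have hm1 : m i = 1 := by have := hm i; omega
      apply hti
      rw [ht]
      simp [hk0, hm1]
    have hlt1 : ∀ i, t i < 1 := by
      intro i
      rw [htu]
      have : 0 < (1 - (k i : ℚ) * c) / (m i : ℚ) :=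
        div_pos (by have := hkc i; linarith) (by have := hmQ i; linarith)
      linarith
    have hhalf : ∀ i ∈ S, 1/2 ≤ t i := by
      intro i hi
      rw [hSdef, Finset.mem_filter] at hi
      rw [htu]
      rcases Nat.eq_zero_or_pos (k i) with hk0 | hkpos
      · have h2 : 2 ≤ m i := by rcases hi.2 with h | h <;> omega
        have h2Q : (2:ℚ) ≤ (m i : ℚ) := by exact_mod_cast h2
        have : (1 - (k i : ℚ) * c) / (m i : ℚ) ≤ 1/2 := by
          rw [hk0]; push_cast
          rw [div_le_div_iff₀ (by linarith) (by norm_num)]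
          linarith
        linarith
      · have hk1' : k i = 1 := by have := hk1 i; omega
        have : (1 - (k i : ℚ) * c) / (m i : ℚ) ≤ 1 - c := by
          rw [hk1']; push_cast; rw [one_mul]
          exact div_le_self (by linarith) (hmQ i)
        linarith
    have hstrict : 1/2 < t i0 := by
      rw [htu, hi0]
      push_cast
      rw [one_mul]
      have : (1 - c) / (m i0 : ℚ) ≤ 1 - c := div_le_self (by linarith) (hmQ i0)
      linarith
    have hi0S : i0 ∈ S := by
      rw [hSdef, Finset.mem_filter]
      exact ⟨Finset.mem_univ _, Or.inl (by omega)⟩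
    -- card S = 3
    have hcard3 : S.card = 3 := by
      have hlb : (2:ℚ) < S.card := by
        calc (2:ℚ) = ∑ i ∈ S, t i := hsumS.symm
        _ < ∑ i ∈ S, 1 := Finset.sum_lt_sum_of_nonempty ⟨i0, hi0S⟩ (fun i _ => hlt1 i)
        _ = S.card := by simp
      have hub : (S.card : ℚ) < 4 := by
        have : ∑ i ∈ S, (1/2 : ℚ) < ∑ i ∈ S, t i :=
          Finset.sum_lt_sum hhalf ⟨i0, hi0S, hstrict⟩
        rw [hsumS] at this
        simp [Finset.sum_const] at this
        push_cast at this ⊢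
        linarith
      have h1 : 2 < S.card := by exact_mod_cast hlb
      have h2 : S.card < 4 := by exact_mod_cast hub
      omega
    obtain ⟨a, b, d, hab, had, hbd, hS⟩ := Finset.card_eq_three.mp hcard3
    have hsum3 : t a + t b + t d = 2 := by
      rw [hS] at hsumS
      rw [Finset.sum_insert (by simp [hab, had]), Finset.sum_insert (by simp [hbd]),
        Finset.sum_singleton] at hsumS
      linarith
    -- equation on u's
    have hueq : (1 - (k a : ℚ) * c) / (m a : ℚ) + (1 - (k b : ℚ) * c) / (m b : ℚ)
        + (1 - (k d : ℚ) * c) / (m d : ℚ) = 1 := by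
      simp only [htu] at hsum3
      linarith
    -- classification of each index in S
    have hB : ∀ x ∈ S, (∃ p : ℕ, 2 ≤ p ∧ (1 - (k x : ℚ) * c) / (m x : ℚ) = 1/(p:ℚ)) ∨
        (∃ mm : ℕ, 1 ≤ mm ∧ (1 - (k x : ℚ) * c) / (m x : ℚ) = (1-c)/(mm:ℚ)) := by
      intro x hx
      rw [hSdef, Finset.mem_filter] at hx
      rcases Nat.eq_zero_or_pos (k x) with hk0 | hkpos
      · left
        refine ⟨m x, by rcases hx.2 with h | h <;> omega, ?_⟩
        rw [hk0]; push_cast; ring_nf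
      · right
        have hk1' : k x = 1 := by have := hk1 x; omega
        exact ⟨m x, hm x, by rw [hk1']; push_cast; ring_nf⟩
    have hT : ∀ x : Fin r, k x = 1 →
        ∃ mm : ℕ, 1 ≤ mm ∧ (1 - (k x : ℚ) * c) / (m x : ℚ) = (1-c)/(mm:ℚ) := by
      intro x hx
      exact ⟨m x, hm x, by rw [hx]; push_cast; ring_nf⟩
    have haS : a ∈ S := by rw [hS]; simp
    have hbS : b ∈ S := by rw [hS]; simp
    have hdS : d ∈ S := by rw [hS]; simp
    have hi0mem : i0 = a ∨ i0 = b ∨ i0 = d := by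
      have := hi0S; rw [hS] at this; simpa using this
    rcases hi0mem with rfl | rfl | rfl
    · exact master c hc1 hclt1 _ _ _ (hT _ hi0) (hB b hbS) (hB d hdS) hueq
    · exact master c hc1 hclt1 _ _ _ (hT _ hi0) (hB a haS) (hB d hdS) (by linarith)
    · exact master c hc1 hclt1 _ _ _ (hT _ hi0) (hB a haS) (hB b hbS) (by linarith)
  · rintro ⟨n, hn, rfl⟩
    have hn0 : (0:ℚ) < (n:ℚ) := by exact_mod_cast (by omega : (0:ℤ) < n)
    have hn3 : (3:ℚ) ≤ (n:ℚ) := by exact_mod_cast hn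
    have hinv : 1/(n:ℚ) ≤ 1/3 := by rw [div_le_div_iff₀ hn0 (by norm_num)]; linarith
    have hinvpos : 0 < 1/(n:ℚ) := by positivity
    refine ⟨by linarith, by linarith, 3, ![1, 2, n.toNat], ![1, 0, 0], by norm_num, ?_, ?_, ?_, ?_⟩
    · intro i
      fin_cases i <;> simp <;> omega
    · intro i
      fin_cases i <;> simp <;> linarith [hinv, hinvpos, one_div (n:ℚ)]
    · simp [Fin.sum_univ_three]
    · have hcast : ((n.toNat : ℕ) : ℚ) = (n:ℚ) := by
        exact_mod_cast congrArg (Int.cast : ℤ → ℚ) (Int.toNat_of_nonneg (by omega))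
      rw [Fin.sum_univ_three]
      simp [hcast]
      field_simp
      ring
end

section
/- Fix rationals ξ with 0 < ξ < 1/2 and ε with 0 < ε < 1, a negative integer a, a positive integer r, and positive integers b₁,…,b_r. Then the set of rational numbers c ∈ (ξ, 1] for which there exist positive integers m₁,…,m_r and nonnegative integers k₁,…,k_r with Σᵢ bᵢkᵢ > 0, with 1 − 1/mᵢ + kᵢ·c/mᵢ < 1 − ε for all i, and with a + Σᵢ bᵢ·(1 − 1/mᵢ + kᵢ·c/mᵢ) = 0, is finite. -/
theorem stmt7 (ξ ε : ℚ) (hξ : 0 < ξ ∧ ξ < 1 / 2) (hε : 0 < ε ∧ ε < 1)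
    (a : ℤ) (ha : a < 0) (r : ℕ) (hr : 0 < r) (b : Fin r → ℕ) (hb : ∀ i, 0 < b i) :
    {c : ℚ | ξ < c ∧ c ≤ 1 ∧
      ∃ (m k : Fin r → ℕ), (∀ i, 0 < m i) ∧
        0 < ∑ i, b i * k i ∧
        (∀ i, 1 - 1 / (m i : ℚ) + (k i : ℚ) * c / (m i : ℚ) < 1 - ε) ∧
        (a : ℚ) + ∑ i, (b i : ℚ) * (1 - 1 / (m i : ℚ) + (k i : ℚ) * c / (m i : ℚ)) = 0}.Finite := by
  obtain ⟨hξ0, hξ2⟩ := hξ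
  obtain ⟨hε0, hε1⟩ := hε
  set M := ⌈(1:ℚ)/ε⌉₊ with hM
  set K := ⌈(1:ℚ)/ξ⌉₊ with hK
  have hfin : ({p : (Fin r → ℕ) × (Fin r → ℕ) |
      (∀ i, p.1 i ≤ M) ∧ (∀ i, p.2 i ≤ K)}).Finite := by
    apply Set.Finite.subset
      (Set.Finite.prod (Set.finite_Iic (fun _ : Fin r => M))
        (Set.finite_Iic (fun _ : Fin r => K)))
    rintro ⟨m, k⟩ ⟨h1, h2⟩
    exact ⟨fun i => h1 i, fun i => h2 i⟩
  apply Set.Finite.subset (hfin.image (fun p =>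
    (-(a:ℚ) - ∑ i, (b i : ℚ) * (1 - 1/(p.1 i : ℚ))) /
      (∑ i, (b i : ℚ) * (p.2 i : ℚ) / (p.1 i : ℚ))))
  rintro c ⟨hc1, hc2, m, k, hm, hk, hlt, heq⟩
  have hc0 : 0 < c := hξ0.trans hc1
  have hmQ : ∀ i, (0:ℚ) < (m i : ℚ) := fun i => by exact_mod_cast hm i
  -- bound on m
  have hmb : ∀ i, m i ≤ M := by
    intro i
    have h1 : (0:ℚ) ≤ (k i : ℚ) * c / (m i : ℚ) := by positivity
    have h2 : 1 - 1 / (m i : ℚ) < 1 - ε := by linarith [hlt i]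
    have h3 : ε < 1 / (m i : ℚ) := by linarith
    have h4 : (m i : ℚ) < 1 / ε := by
      rw [lt_div_iff₀ hε0]
      rw [lt_div_iff₀ (hmQ i)] at h3
      linarith
    exact le_of_lt (Nat.lt_ceil.mpr h4)
  -- bound on k
  have hkb : ∀ i, k i ≤ K := by
    intro i
    have h2 : (k i : ℚ) * c / (m i : ℚ) < 1 / (m i : ℚ) - ε := by linarith [hlt i]
    have h3 : (k i : ℚ) * c < 1 := by
      have := (div_lt_div_iff₀ (hmQ i) (hmQ i)).mp
        (lt_of_lt_of_le h2 (by linarith : 1 / (m i : ℚ) - ε ≤ 1 / (m i : ℚ)))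
      nlinarith [hmQ i]
    have h4 : (k i : ℚ) * ξ < 1 := by
      have : (k i : ℚ) * ξ ≤ (k i : ℚ) * c :=
        mul_le_mul_of_nonneg_left (le_of_lt hc1) (Nat.cast_nonneg _)
      linarith
    have h5 : (k i : ℚ) < 1 / ξ := by
      rw [lt_div_iff₀ hξ0]; linarith
    exact le_of_lt (Nat.lt_ceil.mpr h5)
  -- positivity of denominator
  have hD : (0:ℚ) < ∑ i, (b i : ℚ) * (k i : ℚ) / (m i : ℚ) := by
    obtain ⟨i, -, hi⟩ := Finset.exists_ne_zero_of_sum_ne_zero hk.ne'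
    apply Finset.sum_pos' (fun j _ => by positivity)
    refine ⟨i, Finset.mem_univ i, ?_⟩
    have hbk : 0 < b i * k i := Nat.pos_of_ne_zero hi
    have h1 : (0:ℚ) < (b i : ℚ) := by exact_mod_cast hb i
    have h2 : (0:ℚ) < (k i : ℚ) := by
      have : 0 < k i := Nat.pos_of_mul_pos_left (by rwa [Nat.mul_comm] at hbk)
      exact_mod_cast this
    exact div_pos (mul_pos h1 h2) (hmQ i)
  refine ⟨(m, k), ⟨hmb, hkb⟩, ?_⟩
  -- show the value equals c
  have hsplit : ∑ i, (b i : ℚ) * (1 - 1 / (m i : ℚ) + (k i : ℚ) * c / (m i : ℚ))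
      = (∑ i, (b i : ℚ) * (1 - 1/(m i : ℚ))) + c * ∑ i, (b i : ℚ) * (k i : ℚ) / (m i : ℚ) := by
    rw [Finset.mul_sum, ← Finset.sum_add_distrib]
    apply Finset.sum_congr rfl
    intro i _
    field_simp
  rw [hsplit] at heq
  show (-(a:ℚ) - ∑ i, (b i : ℚ) * (1 - 1/(m i : ℚ))) /
      (∑ i, (b i : ℚ) * (k i : ℚ) / (m i : ℚ)) = c
  rw [div_eq_iff hD.ne']
  linarith
end

section
/- Fix an integer N ≥ 6 and rationals λ₁, λ₂, λ₃ ∈ Φ_sm ∪ [1/2 + 1/N, 1] with each λᵢ ≥ 1/2 and λ₁ + λ₂ + λ₃ = 2. Then the assumptions λ₁ > 1 − 1/N, λ₂ ≥ 1/2, λ₃ ≥ 1/2, λ₂ + λ₃ < 1 + 1/N, and λ₂, λ₃ ∈ Φ_sm ∪ [1/2 + 1/N, 1] imply λ₂ = λ₃ = 1/2 and λ₁ = 1. -/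
/-- The set of standard coefficients `{1 - 1/m : m ∈ ℕ, m ≥ 1} ∪ {1}`. -/
def PhiSm : Set ℚ := {x | ∃ m : ℕ, 0 < m ∧ x = 1 - 1 / m} ∪ {1}

lemma aux8 (N : ℤ) (hN : 6 ≤ N) (x : ℚ)
    (hx : x ∈ PhiSm ∪ Set.Icc (1 / 2 + 1 / (N : ℚ)) 1)
    (h : 1 / 2 ≤ x) (hlt : x < 1 / 2 + 1 / (N : ℚ)) : x = 1 / 2 := by
  have hN6 : (6 : ℚ) ≤ (N : ℚ) := by exact_mod_cast hN
  have hNpos : (0 : ℚ) < (N : ℚ) := by linarith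
  have hinv : 1 / (N : ℚ) ≤ 1 / 6 := by
    rw [div_le_div_iff₀ hNpos (by norm_num)]; linarith
  rcases hx with (⟨m, hm, rfl⟩ | h1) | hIcc
  · have hmpos : (0 : ℚ) < (m : ℚ) := by exact_mod_cast hm
    have h2 : (2 : ℚ) ≤ (m : ℚ) := by
      by_contra hc
      push_neg at hc
      have : (1:ℚ)/2 < 1/(m:ℚ) := by
        rw [div_lt_div_iff₀ (by norm_num) hmpos]; linarith
      linarith
    have h3 : (m : ℚ) < 3 := by
      by_contra hc
      push_neg at hc
      have : 1/(m:ℚ) ≤ 1/3 := by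
        rw [div_le_div_iff₀ hmpos (by norm_num)]; linarith
      linarith
    have hm2 : m = 2 := by
      have a : 2 ≤ m := by exact_mod_cast h2
      have b : m < 3 := by exact_mod_cast h3
      omega
    subst hm2; norm_num
  · simp only [Set.mem_singleton_iff] at h1
    linarith [h1 ▸ hlt]
  · exact absurd hIcc.1 (not_le.mpr hlt)

theorem stmt8 (N : ℤ) (hN : 6 ≤ N) (l₁ l₂ l₃ : ℚ)
    (hPhi₁ : l₁ ∈ PhiSm ∪ Set.Icc (1 / 2 + 1 / (N : ℚ)) 1)
    (hPhi₂ : l₂ ∈ PhiSm ∪ Set.Icc (1 / 2 + 1 / (N : ℚ)) 1)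
    (hPhi₃ : l₃ ∈ PhiSm ∪ Set.Icc (1 / 2 + 1 / (N : ℚ)) 1)
    (h₁ : 1 / 2 ≤ l₁) (h₂ : 1 / 2 ≤ l₂) (h₃ : 1 / 2 ≤ l₃)
    (hsum : l₁ + l₂ + l₃ = 2)
    (hbig : 1 - 1 / (N : ℚ) < l₁)
    (hsmall : l₂ + l₃ < 1 + 1 / (N : ℚ)) :
    l₂ = 1 / 2 ∧ l₃ = 1 / 2 ∧ l₁ = 1 := by
  have e₂ := aux8 N hN l₂ hPhi₂ h₂ (by linarith)
  have e₃ := aux8 N hN l₃ hPhi₃ h₃ (by linarith)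
  exact ⟨e₂, e₃, by linarith⟩
end
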